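/- Let G be a class of scoring functions X → R^{C+1} closed under nonnegative scaling, inducing classifier-rejector pairs (m_g, r_g) as above. Suppose there exists g* ∈ G whose induced pair (m*, r*) has zero population 0-1 deferral loss and satisfies strict score separation on the support of the data distribution. Then any minimizer ĝ of the expected RealizableSurrogate loss over G induces a pair (m̂, r̂) with zero population 0-1 deferral loss. -/

import Mathlib

open scoped Classical
open MeasureTheory Filter

/-- The RealizableSurrogate loss of scores s (indexed by Option (Fin C), with `none` the
deferral score ⊥) on a point with true label y and human prediction h. -/
noncomputable def rsLoss (C : ℕ) (s : Option (Fin C) → ℝ) (y h : Fin C) : ℝ :=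
  -2 * Real.logb 2 ((Real.exp (s (some y)) + (if h = y then Real.exp (s none) else 0)) /
    ∑ i : Option (Fin C), Real.exp (s i))

/-- The 0-1 deferral loss of the classifier-rejector pair induced by scores s, where m is
the argmax label: defer iff all class scores are at most the ⊥ score. -/
noncomputable def zeroOneDefLoss (C : ℕ) (s : Option (Fin C) → ℝ) (m y h : Fin C) : ℝ :=
  if ∀ j : Fin C, s (some j) ≤ s none then (if h = y then 0 else 1)
  else (if m = y then 0 else 1)

section Aux

variable {C : ℕ}

lemma sumExp_pos (s : Option (Fin C) → ℝ) :
    0 < ∑ i : Option (Fin C), Real.exp (s i) :=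
  Finset.sum_pos (fun i _ => Real.exp_pos _) ⟨none, Finset.mem_univ _⟩

lemma ind_nonneg (s : Option (Fin C) → ℝ) (y h : Fin C) :
    0 ≤ (if h = y then Real.exp (s none) else 0) := by
  split
  · exact (Real.exp_pos _).le
  · rfl

lemma ind_le (s : Option (Fin C) → ℝ) (y h : Fin C) :
    (if h = y then Real.exp (s none) else 0) ≤ Real.exp (s none) := by
  split
  · exact le_refl _
  · exact (Real.exp_pos _).le

lemma num_pos (s : Option (Fin C) → ℝ) (y h : Fin C) :
    0 < Real.exp (s (some y)) + (if h = y then Real.exp (s none) else 0) :=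
  lt_of_lt_of_le (Real.exp_pos _) (le_add_of_nonneg_right (ind_nonneg s y h))

lemma num_le_sum (s : Option (Fin C) → ℝ) (y h : Fin C) :
    Real.exp (s (some y)) + (if h = y then Real.exp (s none) else 0)
      ≤ ∑ i : Option (Fin C), Real.exp (s i) := by
  rw [Fintype.sum_option]
  have h1 : Real.exp (s (some y)) ≤ ∑ j : Fin C, Real.exp (s (some j)) :=
    Finset.single_le_sum (f := fun j => Real.exp (s (some j)))
      (fun j _ => (Real.exp_pos _).le) (Finset.mem_univ y)
  split
  · linarith
  · linarith [Real.exp_pos (s none)]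

lemma rsLoss_nonneg (s : Option (Fin C) → ℝ) (y h : Fin C) : 0 ≤ rsLoss C s y h := by
  unfold rsLoss
  have h1 : Real.logb 2 ((Real.exp (s (some y)) + (if h = y then Real.exp (s none) else 0)) /
      ∑ i : Option (Fin C), Real.exp (s i)) ≤ 0 := by
    apply Real.logb_nonpos (by norm_num)
    · exact (div_pos (num_pos s y h) (sumExp_pos s)).le
    · rw [div_le_one (sumExp_pos s)]; exact num_le_sum s y h
  linarith

lemma rsLoss_ge (s : Option (Fin C) → ℝ) (y h : Fin C) {r : ℝ}
    (hr : (Real.exp (s (some y)) + (if h = y then Real.exp (s none) else 0)) /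
      (∑ i : Option (Fin C), Real.exp (s i)) ≤ r) :
    -2 * Real.logb 2 r ≤ rsLoss C s y h := by
  unfold rsLoss
  have hpos := div_pos (num_pos s y h) (sumExp_pos s)
  have h1 := Real.logb_le_logb_of_le (b := 2) (by norm_num) hpos hr
  linarith

lemma one_le_two_logb : (1:ℝ) ≤ -2 * Real.logb 2 (2/3) := by
  have h2 : Real.logb 2 ((2:ℝ)/3) = -Real.logb 2 (3/2) := by
    rw [show (2:ℝ)/3 = ((3:ℝ)/2)⁻¹ by norm_num, Real.logb_inv]
  rw [h2]
  have h3 : (1/2 : ℝ) ≤ Real.logb 2 (3/2) := by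
    rw [Real.le_logb_iff_rpow_le (by norm_num) (by norm_num)]
    rw [show (2:ℝ) ^ (1/2 : ℝ) = Real.sqrt 2 from (Real.sqrt_eq_rpow 2).symm,
      Real.sqrt_le_iff]
    norm_num
  linarith

lemma zod_le_rs (s : Option (Fin C) → ℝ) (m y h : Fin C)
    (hm : ∀ j, s (some j) ≤ s (some m)) :
    zeroOneDefLoss C s m y h ≤ rsLoss C s y h := by
  unfold zeroOneDefLoss
  by_cases hdef : ∀ j : Fin C, s (some j) ≤ s none
  · rw [if_pos hdef]
    by_cases hhy : h = y
    · rw [if_pos hhy]; exact rsLoss_nonneg s y h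
    · rw [if_neg hhy]
      refine le_trans ?_ (rsLoss_ge s y h (r := 1/2) ?_)
      · rw [show (1/2 : ℝ) = 2⁻¹ by norm_num, Real.logb_inv,
          Real.logb_self_eq_one (by norm_num : (1:ℝ) < 2)]
        norm_num
      · rw [if_neg hhy, add_zero, div_le_iff₀ (sumExp_pos s)]
        have h1 := num_le_sum s y y
        rw [if_pos rfl] at h1
        have h2 : Real.exp (s (some y)) ≤ Real.exp (s none) :=
          Real.exp_le_exp.2 (hdef y)
        linarith
  · rw [if_neg hdef]
    by_cases hmy : m = y
    · rw [if_pos hmy]; exact rsLoss_nonneg s y h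
    · rw [if_neg hmy]
      refine le_trans one_le_two_logb (rsLoss_ge s y h (r := 2/3) ?_)
      push_neg at hdef
      obtain ⟨j0, hj0⟩ := hdef
      have e1 : Real.exp (s (some y)) ≤ Real.exp (s (some m)) := Real.exp_le_exp.2 (hm y)
      have e2 : Real.exp (s none) ≤ Real.exp (s (some m)) :=
        Real.exp_le_exp.2 (lt_of_lt_of_le hj0 (hm j0)).le
      have hsum : Real.exp (s none) + (Real.exp (s (some y)) + Real.exp (s (some m)))
          ≤ ∑ i : Option (Fin C), Real.exp (s i) := by
        rw [Fintype.sum_option]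
        have hpair : Real.exp (s (some y)) + Real.exp (s (some m))
            = ∑ j ∈ ({y, m} : Finset (Fin C)), Real.exp (s (some j)) :=
          (Finset.sum_pair (f := fun j => Real.exp (s (some j)))
            (fun hc : y = m => hmy hc.symm)).symm
        rw [hpair]
        have := Finset.sum_le_sum_of_subset_of_nonneg
          (Finset.subset_univ ({y, m} : Finset (Fin C)))
          (fun i _ _ => (Real.exp_pos (s (some i))).le)
        linarith
      rw [div_le_iff₀ (sumExp_pos s)]
      have h3 := ind_le s y h
      linarith

/-- Upper bound on the surrogate in terms of a reference index `i0` whose exponential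
is dominated by the numerator. -/
lemma rs_le_bound (s : Option (Fin C) → ℝ) (y h : Fin C) (i0 : Option (Fin C))
    (hN : Real.exp (s i0) ≤ Real.exp (s (some y)) + (if h = y then Real.exp (s none) else 0)) :
    rsLoss C s y h ≤ 2 * Real.logb 2 (∑ i : Option (Fin C), Real.exp (s i - s i0)) := by
  have hS := sumExp_pos s
  have key : ∑ i : Option (Fin C), Real.exp (s i - s i0)
      = (∑ i : Option (Fin C), Real.exp (s i)) / Real.exp (s i0) := by
    rw [Finset.sum_div]
    exact Finset.sum_congr rfl (fun i _ => by rw [Real.exp_sub])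
  rw [key]
  unfold rsLoss
  have h1 : Real.exp (s i0) / (∑ i : Option (Fin C), Real.exp (s i))
      ≤ (Real.exp (s (some y)) + (if h = y then Real.exp (s none) else 0)) /
        (∑ i : Option (Fin C), Real.exp (s i)) :=
    (div_le_div_iff_of_pos_right hS).mpr hN
  have h2 := Real.logb_le_logb_of_le (b := 2) (by norm_num)
    (div_pos (Real.exp_pos _) hS) h1
  have h3 : Real.logb 2 ((∑ i : Option (Fin C), Real.exp (s i)) / Real.exp (s i0))
      = -Real.logb 2 (Real.exp (s i0) / (∑ i : Option (Fin C), Real.exp (s i))) := by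
    rw [← Real.logb_inv, inv_div]
  linarith [h2, h3]

/-- The bound on a weakly dominated score vector. -/
lemma bound_le_const (s : Option (Fin C) → ℝ) (i0 : Option (Fin C))
    (hmax : ∀ i, s i ≤ s i0) :
    2 * Real.logb 2 (∑ i : Option (Fin C), Real.exp (s i - s i0))
      ≤ 2 * Real.logb 2 (C + 1) := by
  have hsum : ∑ i : Option (Fin C), Real.exp (s i - s i0) ≤ (C : ℝ) + 1 := by
    have h1 : ∀ i : Option (Fin C), Real.exp (s i - s i0) ≤ 1 := fun i => by
      rw [Real.exp_le_one_iff]; linarith [hmax i]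
    calc ∑ i : Option (Fin C), Real.exp (s i - s i0)
        ≤ ∑ _i : Option (Fin C), (1:ℝ) := Finset.sum_le_sum (fun i _ => h1 i)
      _ = (C : ℝ) + 1 := by
          simp [Finset.card_univ]
  have h2 := Real.logb_le_logb_of_le (b := 2) (by norm_num) (sumExp_pos _) hsum
  linarith

end Aux

set_option maxHeartbeats 1000000 in
/-- Realizable consistency of the RealizableSurrogate: if the class G of scoring functions
is closed under nonnegative scaling, contains a scoring function g* with zero population
0-1 deferral loss and strict score separation a.s., and the expected surrogate losses are
defined, then any minimizer of the expected surrogate over G induces a classifier-rejector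
pair with zero population 0-1 deferral loss. -/
theorem stmt11 {𝒳 Ω : Type*} [MeasurableSpace Ω] (μ : Measure Ω)
    [IsProbabilityMeasure μ] (C : ℕ)
    (X : Ω → 𝒳) (Y H : Ω → Fin C)
    (G : Set (𝒳 → Option (Fin C) → ℝ))
    (hscale : ∀ g ∈ G, ∀ α : ℝ, 0 ≤ α → (fun x i => α * g x i) ∈ G)
    (hint : ∀ g ∈ G, Integrable (fun ω => rsLoss C (g (X ω)) (Y ω) (H ω)) μ)
    (gstar : 𝒳 → Option (Fin C) → ℝ) (hgstar : gstar ∈ G)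
    (hsep : ∀ᵐ ω ∂μ,
      ((∀ j : Fin C, gstar (X ω) (some j) < gstar (X ω) none) ∧ H ω = Y ω) ∨
      (∀ i : Option (Fin C), i ≠ some (Y ω) → gstar (X ω) i < gstar (X ω) (some (Y ω))))
    (ghat : 𝒳 → Option (Fin C) → ℝ) (hghat : ghat ∈ G)
    (hmin : ∀ g ∈ G, ∫ ω, rsLoss C (ghat (X ω)) (Y ω) (H ω) ∂μ
      ≤ ∫ ω, rsLoss C (g (X ω)) (Y ω) (H ω) ∂μ)
    (mhat : 𝒳 → Fin C) (hmhat : ∀ x j, ghat x (some j) ≤ ghat x (some (mhat x))) :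
    ∫ ω, zeroOneDefLoss C (ghat (X ω)) (mhat (X ω)) (Y ω) (H ω) ∂μ = 0 := by
  by_cases hI : Integrable
      (fun ω => zeroOneDefLoss C (ghat (X ω)) (mhat (X ω)) (Y ω) (H ω)) μ
  swap
  · exact integral_undef hI
  -- scaled versions of gstar
  have hfG : ∀ n : ℕ, (fun x i => (n : ℝ) * gstar x i) ∈ G := fun n =>
    hscale gstar hgstar n (Nat.cast_nonneg n)
  set f : ℕ → Ω → ℝ := fun n ω =>
    rsLoss C (fun i => (n : ℝ) * gstar (X ω) i) (Y ω) (H ω) with hf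
  have hfInt : ∀ n, Integrable (f n) μ := by
    intro n
    simp only [hf]
    simpa using hint _ (hfG n)
  -- a.e. bound and convergence
  have hbc : ∀ᵐ ω ∂μ, (∀ n : ℕ, ‖f n ω‖ ≤ 2 * Real.logb 2 (C + 1)) ∧
      Tendsto (fun n => f n ω) atTop (nhds 0) := by
    filter_upwards [hsep] with ω hω
    set s : Option (Fin C) → ℝ := gstar (X ω) with hs
    -- choose reference index
    obtain ⟨i0, hstrict, hNcase⟩ :
        ∃ i0 : Option (Fin C), (∀ i, i ≠ i0 → s i < s i0) ∧
          (i0 = some (Y ω) ∨ (i0 = none ∧ H ω = Y ω)) := by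
      rcases hω with ⟨hlt, hhy⟩ | hstr
      · refine ⟨none, ?_, Or.inr ⟨rfl, hhy⟩⟩
        rintro (_ | j) hne
        · exact absurd rfl hne
        · exact hlt j
      · exact ⟨some (Y ω), hstr, Or.inl rfl⟩
    have hmax : ∀ i, s i ≤ s i0 := fun i => by
      by_cases hi : i = i0
      · exact hi ▸ le_refl _
      · exact (hstrict i hi).le
    -- hN at each scale n
    have hN : ∀ n : ℕ, Real.exp ((n : ℝ) * s i0) ≤
        Real.exp ((n : ℝ) * s (some (Y ω))) +
        (if H ω = Y ω then Real.exp ((n : ℝ) * s none) else 0) := by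
      intro n
      rcases hNcase with h | ⟨h, hhy⟩
      · rw [h]
        exact le_add_of_nonneg_right (ind_nonneg (fun i => (n:ℝ) * s i) (Y ω) (H ω))
      · rw [h, if_pos hhy]
        exact le_add_of_nonneg_left (Real.exp_pos _).le
    have hub : ∀ n : ℕ, f n ω ≤
        2 * Real.logb 2 (∑ i : Option (Fin C), Real.exp ((n : ℝ) * (s i - s i0))) := by
      intro n
      have := rs_le_bound (fun i => (n : ℝ) * s i) (Y ω) (H ω) i0 (hN n)
      simpa [mul_sub] using this
    have hlb : ∀ n : ℕ, 0 ≤ f n ω := fun n =>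
      rsLoss_nonneg (fun i => (n : ℝ) * s i) (Y ω) (H ω)
    constructor
    · intro n
      rw [Real.norm_eq_abs, abs_of_nonneg (hlb n)]
      refine le_trans (hub n) ?_
      have hmax' : ∀ i, (n : ℝ) * s i ≤ (n : ℝ) * s i0 := fun i =>
        mul_le_mul_of_nonneg_left (hmax i) (Nat.cast_nonneg n)
      have := bound_le_const (fun i => (n : ℝ) * s i) i0 hmax'
      simpa [mul_sub] using this
    · -- convergence of the upper bound to 0
      have hsum_tendsto : Tendsto
          (fun n : ℕ => ∑ i : Option (Fin C), Real.exp ((n : ℝ) * (s i - s i0)))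
          atTop (nhds (∑ i : Option (Fin C), if i = i0 then (1:ℝ) else 0)) := by
        refine tendsto_finset_sum _ (fun i _ => ?_)
        by_cases hi : i = i0
        · simp only [hi, sub_self, mul_zero, Real.exp_zero, if_pos]
          exact tendsto_const_nhds
        · rw [if_neg hi]
          have hd : s i - s i0 < 0 := sub_neg.mpr (hstrict i hi)
          have h1 : Tendsto (fun n : ℕ => (n : ℝ) * (s i - s i0)) atTop atBot :=
            Tendsto.atTop_mul_const_of_neg hd tendsto_natCast_atTop_atTop
          exact Real.tendsto_exp_atBot.comp h1
      have hsum1 : (∑ i : Option (Fin C), if i = i0 then (1:ℝ) else 0) = 1 := by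
        simp [Finset.sum_ite_eq']
      rw [hsum1] at hsum_tendsto
      have hlog : Tendsto
          (fun n : ℕ => 2 * Real.logb 2
            (∑ i : Option (Fin C), Real.exp ((n : ℝ) * (s i - s i0))))
          atTop (nhds 0) := by
        have hcont : ContinuousAt (fun x : ℝ => 2 * Real.logb 2 x) 1 := by
          apply ContinuousAt.mul continuousAt_const
          unfold Real.logb
          exact (Real.continuousAt_log one_ne_zero).div_const _
        have := hcont.tendsto.comp hsum_tendsto
        simpa [Function.comp_def] using this
      exact squeeze_zero hlb hub hlog
  -- dominated convergence
  have hDCT : Tendsto (fun n => ∫ ω, f n ω ∂μ) atTop (nhds 0) := by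
    have h0 : (0:ℝ) = ∫ _ω, (0:ℝ) ∂μ := by simp
    rw [h0]
    refine tendsto_integral_of_dominated_convergence
      (fun _ => 2 * Real.logb 2 (C + 1))
      (fun n => (hfInt n).aestronglyMeasurable)
      (integrable_const _)
      (fun n => ?_) ?_
    · filter_upwards [hbc] with ω hω using hω.1 n
    · filter_upwards [hbc] with ω hω using hω.2
  -- sandwich
  have hrs_le : ∀ n : ℕ, ∫ ω, rsLoss C (ghat (X ω)) (Y ω) (H ω) ∂μ ≤ ∫ ω, f n ω ∂μ := by
    intro n
    simp only [hf]
    simpa using hmin _ (hfG n)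
  have h3 : ∫ ω, rsLoss C (ghat (X ω)) (Y ω) (H ω) ∂μ ≤ 0 :=
    ge_of_tendsto' hDCT hrs_le
  have h1 : 0 ≤ ∫ ω, zeroOneDefLoss C (ghat (X ω)) (mhat (X ω)) (Y ω) (H ω) ∂μ :=
    integral_nonneg (fun ω => by
      unfold zeroOneDefLoss
      split <;> split <;> norm_num)
  have h2 : ∫ ω, zeroOneDefLoss C (ghat (X ω)) (mhat (X ω)) (Y ω) (H ω) ∂μ
      ≤ ∫ ω, rsLoss C (ghat (X ω)) (Y ω) (H ω) ∂μ :=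
    integral_mono hI (hint ghat hghat)
      (fun ω => zod_le_rs (ghat (X ω)) (mhat (X ω)) (Y ω) (H ω) (hmhat (X ω)))
  linarith
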